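/- If W is a finitely generated FI_V-module over a Noetherian ring (taking Noetherianity of FI_V-Mod as a hypothesis), and T ⊆ W is the submodule of torsion elements (T_n = torsion subgroup of W_n over ℤ), then there is an integer e, independent of n, such that e·T_n = 0 for all n; i.e., the exponents of the torsion subgroups W_n are uniformly bounded. -/

import Mathlib

open CategoryTheory

/-- Torsion submodule (with the `∃ m : ℕ, 1 ≤ m ∧ ...` phrasing). -/
def torsionSub (M : ModuleCat ℤ) : Submodule ℤ M where
  carrier := {x | ∃ m : ℕ, 1 ≤ m ∧ (m : ℤ) • x = 0}
  zero_mem' := ⟨1, le_refl 1, zsmul_zero _⟩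
  add_mem' := by
    rintro a b ⟨m, hm, hma⟩ ⟨n, hn, hnb⟩
    refine ⟨m * n, Nat.one_le_iff_ne_zero.mpr (by positivity), ?_⟩
    push_cast
    have h1 : ((m:ℤ)*n) • a = 0 := by rw [mul_comm, mul_zsmul, hma, zsmul_zero]
    have h2 : ((m:ℤ)*n) • b = 0 := by rw [mul_zsmul, hnb, zsmul_zero]
    rw [zsmul_add, h1, h2, add_zero]
  smul_mem' := by
    rintro r a ⟨m, hm, hma⟩
    exact ⟨m, hm, by rw [smul_comm, hma, smul_zero]⟩

/-- If `W` is a functor from a category `C` to `ℤ`-modules such that every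
subfunctor of `W` is finitely generated (the Noetherian hypothesis), then the torsion
subgroups of the `W c` have uniformly bounded exponent: there is `e ≥ 1`, independent of
`c`, with `e · x = 0` for every torsion element `x ∈ W c`. -/
theorem uniform_torsion_exponent (C : Type*) [Category C] (W : C ⥤ ModuleCat ℤ)
    (hNoeth : ∀ N : ∀ c : C, Submodule ℤ (W.obj c),
      (∀ (c d : C) (f : c ⟶ d), ∀ x ∈ N c, (W.map f) x ∈ N d) →
      ∃ L : List (Σ c : C, W.obj c), (∀ p ∈ L, p.2 ∈ N p.1) ∧
        ∀ c : C, N c ≤ Submodule.span ℤ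
          {y : W.obj c | ∃ p ∈ L, ∃ f : p.1 ⟶ c, (W.map f) p.2 = y}) :
    ∃ e : ℕ, 1 ≤ e ∧ ∀ (c : C) (x : W.obj c),
      (∃ m : ℕ, 1 ≤ m ∧ (m : ℤ) • x = 0) → (e : ℤ) • x = 0 := by
  obtain ⟨L, hLmem, hLspan⟩ := hNoeth (fun c => torsionSub (W.obj c)) (by
    rintro c d f x (⟨m, hm, hmx⟩ : ∃ m : ℕ, 1 ≤ m ∧ (m : ℤ) • x = 0)
    exact (⟨m, hm, by rw [← map_zsmul (W.map f).hom (m:ℤ) x, hmx, map_zero]⟩ : ∃ m : ℕ, 1 ≤ m ∧ (m : ℤ) • (W.map f) x = 0))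
  -- For each generator choose a killing exponent
  choose ord hord1 hordkill using fun (p : {p : (Σ c : C, W.obj c) // p ∈ L}) =>
    (hLmem p.1 p.2 : ∃ m : ℕ, 1 ≤ m ∧ (m : ℤ) • p.1.2 = 0)
  -- e := product of the orders over the attached list
  refine ⟨(L.attach.map ord).prod, ?_, ?_⟩
  · apply Nat.one_le_iff_ne_zero.mpr
    intro h0
    have h0m : (0:ℕ) ∈ L.attach.map ord := List.prod_eq_zero_iff.mp h0
    obtain ⟨pp, _, hpp⟩ := List.mem_map.mp h0m
    have := hord1 pp; omega
  · intro c x hx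
    have hxspan := hLspan c (hx : x ∈ torsionSub (W.obj c))
    -- the set of elements killed by e is a submodule containing the generators' images
    set e : ℕ := (L.attach.map ord).prod with he
    have : x ∈ Submodule.span ℤ
        {y : W.obj c | ∃ p ∈ L, ∃ f : p.1 ⟶ c, (W.map f) p.2 = y} := hxspan
    refine Submodule.span_induction ?_ (zsmul_zero _) ?_ ?_ this
    · rintro y ⟨p, hp, f, rfl⟩
      have hdvd : ord ⟨p, hp⟩ ∣ e := List.dvd_prod (List.mem_map.mpr ⟨⟨p, hp⟩, List.mem_attach _ _, rfl⟩)
      obtain ⟨k, hk⟩ := hdvd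
      have hkill := hordkill ⟨p, hp⟩
      rw [hk]
      push_cast
      rw [mul_comm, mul_zsmul, ← map_zsmul (W.map f).hom _ p.2, hkill, map_zero, zsmul_zero]
    · intro a b _ _ ha hb
      rw [zsmul_add, ha, hb, add_zero]
    · intro r a _ ha
      rw [smul_comm, ha, smul_zero]
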